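/- Let 0 < α < 1, T > 0, and let w ∈ L²(ℝ) with support contained in [-T, T]. Then there exists a constant C > 0 depending only on α such that ∫_ℝ |ŵ(z)|²/(1 + |z|)^α dz ≤ C T^α ‖w‖²_{L²(ℝ)}, where ŵ denotes the Fourier transform of w. -/

import Mathlib

open MeasureTheory Real Complex
open Set Function FourierTransform
open scoped ENNReal NNReal

lemma my_bern {m β : ℝ} (hm : 0 ≤ m) (hβ0 : 0 ≤ β) (hβ1 : β ≤ 1) :
    (1 + m) ^ β ≤ 1 + m ^ β := by
  have h := NNReal.rpow_add_le_add_rpow (1 : ℝ≥0) m.toNNReal hβ0 hβ1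
  have := (NNReal.coe_le_coe).2 h
  push_cast at this
  simpa [Real.coe_toNNReal m hm, Real.one_rpow] using this

lemma memℒp_two_of_lt_top {X : Type*} [MeasurableSpace X] (μ : Measure X) {f : X → ℂ}
    (hf : AEStronglyMeasurable f μ) (h : ∫⁻ x, (‖f x‖₊ : ℝ≥0∞) ^ 2 ∂μ < ⊤) :
    MemLp f 2 μ := by
  refine ⟨hf, ?_⟩
  rw [eLpNorm_eq_lintegral_rpow_enorm_toReal (by norm_num) (by norm_num)]
  have h2 : (2 : ℝ≥0∞).toReal = 2 := by norm_num
  rw [h2]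
  have : ∫⁻ x, (‖f x‖₊ : ℝ≥0∞) ^ (2:ℝ) ∂μ = ∫⁻ x, (‖f x‖₊ : ℝ≥0∞) ^ 2 ∂μ := by
    congr 1; ext x; rw [← ENNReal.rpow_natCast _ 2]; norm_num
  simp only [enorm_eq_nnnorm]
  rw [this]
  exact ENNReal.rpow_lt_top_of_nonneg (by norm_num) h.ne

lemma lt_top_of_memℒp_two {X : Type*} [MeasurableSpace X] {μ : Measure X} {f : X → ℂ}
    (h : MemLp f 2 μ) : ∫⁻ x, (‖f x‖₊ : ℝ≥0∞) ^ 2 ∂μ < ⊤ := by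
  have h2 := h.2
  rw [eLpNorm_eq_lintegral_rpow_enorm_toReal (by norm_num) (by norm_num)] at h2
  have h3 : (2 : ℝ≥0∞).toReal = 2 := by norm_num
  rw [h3] at h2
  have h4 : ∫⁻ x, (‖f x‖₊ : ℝ≥0∞) ^ (2:ℝ) ∂μ = ∫⁻ x, (‖f x‖₊ : ℝ≥0∞) ^ 2 ∂μ := by
    congr 1; ext x; rw [← ENNReal.rpow_natCast _ 2]; norm_num
  simp only [enorm_eq_nnnorm] at h2
  rw [h4] at h2
  have := (ENNReal.rpow_lt_top_iff_of_pos (by norm_num : (0:ℝ) < 1/2)).1 h2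
  exact this


lemma grid_parseval (T : ℝ) (hT : 0 < T) (w : ℝ → ℂ)
    (hwm : StronglyMeasurable w) (hw2 : MemLp w 2 (volume : Measure ℝ))
    (hwi : Integrable w) (hsupp : ∀ t, t ∉ Set.Icc (-T) T → w t = 0) (θ : ℝ) :
    HasSum (fun n : ℤ => ‖𝓕 w ((n + θ) / (2 * T))‖ ^ 2)
      ((2 * T) * ∫ t : ℝ, ‖w t‖ ^ 2) := by
  set N : ℝ := ∫ t : ℝ, ‖w t‖ ^ 2 with hNdef
  set L : ℝ := 2 * T with hLdef
  have hL : 0 < L := by positivity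
  have hLne : L ≠ 0 := hL.ne'
  haveI : Fact (0 < L) := ⟨hL⟩
  have hTL : -T + L = T := by rw [hLdef]; ring
  set g : ℝ → ℂ := fun t => (Real.fourierChar (-(t * (θ / L))) : ℂ) * w t with hgdef
  have hcont : Continuous fun t : ℝ => (Real.fourierChar (-(t * (θ / L))) : ℂ) := by
    apply Continuous.comp continuous_induced_dom
    exact Real.continuous_fourierChar.comp (by continuity)
  have hgm : Measurable g := hcont.measurable.mul hwm.measurable
  have hgnorm : ∀ t, ‖g t‖ = ‖w t‖ := by
    intro t
    rw [hgdef]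
    simp only [norm_mul, Circle.norm_coe, one_mul]
  have hgsupp : ∀ t, t ∉ Set.Icc (-T) T → g t = 0 := by
    intro t ht; rw [hgdef]; simp [hsupp t ht]
  set G : AddCircle L → ℂ := AddCircle.liftIoc L (-T) g with hGdef
  have hGm : Measurable G := by
    have : G = g ∘ (Subtype.val) ∘ (AddCircle.measurableEquivIoc L (-T)) := rfl
    rw [this]
    exact hgm.comp (measurable_subtype_coe.comp (AddCircle.measurableEquivIoc L (-T)).measurable)
  have hGIoc : ∀ x ∈ Set.Ioc (-T) (-T + L), G ↑x = g x := by
    intro x hx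
    exact AddCircle.liftIoc_coe_apply hx
  -- relating lintegrals over circle wrt volume and haar
  have hsmul : (volume : Measure (AddCircle L)) =
      ENNReal.ofReal L • (AddCircle.haarAddCircle : Measure (AddCircle L)) :=
    AddCircle.volume_eq_smul_haarAddCircle
  -- finiteness of the L² norm of G
  have hG2 : MemLp G 2 (AddCircle.haarAddCircle : Measure (AddCircle L)) := by
    apply memℒp_two_of_lt_top _ hGm.aestronglyMeasurable
    have hvol : ∫⁻ x, (‖G x‖₊ : ℝ≥0∞) ^ 2 ∂(volume : Measure (AddCircle L)) =
        ENNReal.ofReal L * ∫⁻ x, (‖G x‖₊ : ℝ≥0∞) ^ 2 ∂AddCircle.haarAddCircle := by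
      rw [hsmul, lintegral_smul_measure, smul_eq_mul]
    have hfin : ∫⁻ x, (‖G x‖₊ : ℝ≥0∞) ^ 2 ∂(volume : Measure (AddCircle L)) < ⊤ := by
      rw [← AddCircle.lintegral_preimage L (-T) (fun b => (‖G b‖₊ : ℝ≥0∞) ^ 2)]
      have : ∫⁻ x in Set.Ioc (-T) (-T + L), (‖G ↑x‖₊ : ℝ≥0∞) ^ 2 =
          ∫⁻ x in Set.Ioc (-T) (-T + L), (‖w x‖₊ : ℝ≥0∞) ^ 2 := by
        apply setLIntegral_congr_fun measurableSet_Ioc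
        intro x hx
        dsimp only
        rw [hGIoc x hx]
        congr 2
        ext
        exact hgnorm x
      rw [this]
      calc ∫⁻ x in Set.Ioc (-T) (-T + L), (‖w x‖₊ : ℝ≥0∞) ^ 2
          ≤ ∫⁻ x : ℝ, (‖w x‖₊ : ℝ≥0∞) ^ 2 := lintegral_mono' Measure.restrict_le_self le_rfl
        _ < ⊤ := lt_top_of_memℒp_two hw2
    by_contra hcon
    push_neg at hcon
    rw [top_le_iff] at hcon
    rw [hcon, ENNReal.mul_top (by simp [hL])] at hvol
    exact hfin.ne hvol
  -- Fourier coefficients of G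
  have hint_eq : ∀ z' : ℝ, (∫ x in Set.Ioc (-T) (-T + L),
      (Real.fourierChar (-(x * z')) : ℂ) * w x) = 𝓕 w z' := by
    intro z'
    have hsub : (Function.support fun x : ℝ => (Real.fourierChar (-(x * z')) : ℂ) * w x) ⊆
        Set.Icc (-T) (-T + L) := by
      intro x hx
      have : w x ≠ 0 := by
        intro h0; apply hx; simp [h0]
      have hxI : x ∈ Set.Icc (-T) T := by
        by_contra hmem; exact this (hsupp x hmem)
      rw [hTL]; exact hxI
    rw [← integral_Icc_eq_integral_Ioc, ← integral_indicator measurableSet_Icc,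
      Set.indicator_eq_self.2 hsub]
    rw [Real.fourier_real_eq]
    congr 1
  have hcoef : ∀ n : ℤ, fourierCoeff G n = (1 / L : ℝ) • 𝓕 w ((n + θ) / L) := by
    intro n
    rw [fourierCoeff_eq_intervalIntegral G n (-T)]
    congr 1
    rw [intervalIntegral.integral_of_le (by linarith : -T ≤ -T + L)]
    rw [← hint_eq ((n + θ) / L)]
    apply setIntegral_congr_fun measurableSet_Ioc
    intro x hx
    dsimp only
    rw [hGIoc x hx, hgdef]
    simp only [smul_eq_mul]
    rw [fourier_coe_apply, Real.fourierChar_apply, Real.fourierChar_apply]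
    rw [← mul_assoc, ← Complex.exp_add]
    have hTC : (T : ℂ) ≠ 0 := by exact_mod_cast hT.ne'
    congr 2
    rw [hLdef]
    push_cast
    field_simp
    all_goals ring
  -- Parseval
  set F := hG2.toLp G with hFdef
  have hFae : ⇑F =ᵐ[AddCircle.haarAddCircle] G := hG2.coeFn_toLp
  have hreprF : ∀ n : ℤ, fourierCoeff (⇑F) n = fourierCoeff G n := by
    intro n
    apply integral_congr_ae
    filter_upwards [hFae] with t ht
    rw [ht]
  have hsummable : Summable (fun n : ℤ => ‖fourierCoeff (⇑F) n‖ ^ 2) := by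
    have h1 : Memℓp (⇑(fourierBasis.repr F)) 2 := (fourierBasis.repr F).property
    have h2 := (memℓp_gen_iff (p := 2) (by norm_num)).1 h1
    have h3 : ∀ n : ℤ, ‖(fourierBasis.repr F) n‖ ^ (2 : ℝ≥0∞).toReal =
        ‖fourierCoeff (⇑F) n‖ ^ 2 := by
      intro n
      rw [fourierBasis_repr]
      have h4 : ((2:ℝ≥0∞)).toReal = ((2:ℕ):ℝ) := by norm_num
      rw [h4, Real.rpow_natCast]
    exact (summable_congr h3).1 h2
  have hPar := tsum_sq_fourierCoeff F
  -- compute RHS of Parseval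
  have hRHS : ∫ t : AddCircle L, ‖F t‖ ^ 2 ∂AddCircle.haarAddCircle = L⁻¹ * N := by
    have e1 : ∫ t : AddCircle L, ‖F t‖ ^ 2 ∂AddCircle.haarAddCircle =
        ∫ t : AddCircle L, ‖G t‖ ^ 2 ∂AddCircle.haarAddCircle := by
      apply integral_congr_ae
      filter_upwards [hFae] with t ht
      rw [ht]
    have e2 : ∫ t : AddCircle L, ‖G t‖ ^ 2 ∂(volume : Measure (AddCircle L)) =
        L * ∫ t : AddCircle L, ‖G t‖ ^ 2 ∂AddCircle.haarAddCircle := by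
      rw [hsmul, integral_smul_measure, ENNReal.toReal_ofReal hL.le, smul_eq_mul]
    have e3 : ∫ t : AddCircle L, ‖G t‖ ^ 2 ∂(volume : Measure (AddCircle L)) = N := by
      rw [← AddCircle.integral_preimage L (-T) (fun b => ‖G b‖ ^ 2)]
      have e4 : ∫ x in Set.Ioc (-T) (-T + L), ‖G ↑x‖ ^ 2 =
          ∫ x in Set.Ioc (-T) (-T + L), ‖w x‖ ^ 2 := by
        apply setIntegral_congr_fun measurableSet_Ioc
        intro x hx
        dsimp only
        rw [hGIoc x hx, hgnorm x]
      rw [e4, hNdef]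
      have hsub : (Function.support fun x : ℝ => ‖w x‖ ^ 2) ⊆ Set.Icc (-T) (-T + L) := by
        intro x hx
        have : w x ≠ 0 := by
          intro h0; apply hx; simp [h0]
        have hxI : x ∈ Set.Icc (-T) T := by
          by_contra hmem; exact this (hsupp x hmem)
        rw [hTL]; exact hxI
      rw [← integral_Icc_eq_integral_Ioc, ← integral_indicator measurableSet_Icc,
        Set.indicator_eq_self.2 hsub]
    rw [e1, ← e3, e2]
    field_simp
  -- assemble
  have hval : HasSum (fun n : ℤ => ‖fourierCoeff (⇑F) n‖ ^ 2) (L⁻¹ * N) := by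
    have := hsummable.hasSum
    rwa [hPar, hRHS] at this
  have hfe : (fun n : ℤ => ‖fourierCoeff (⇑F) n‖ ^ 2) =
      fun n : ℤ => (1 / L) ^ 2 * ‖𝓕 w ((n + θ) / L)‖ ^ 2 := by
    funext n
    rw [hreprF n, hcoef n, norm_smul, mul_pow]
    congr 1
    rw [Real.norm_eq_abs, abs_of_pos (by positivity : (0:ℝ) < 1 / L)]
  rw [hfe] at hval
  have hval3 := hval.mul_left (L ^ 2)
  have heq : (fun n : ℤ => L ^ 2 * ((1 / L) ^ 2 * ‖𝓕 w ((n + θ) / L)‖ ^ 2)) =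
      fun n : ℤ => ‖𝓕 w ((n + θ) / L)‖ ^ 2 := by
    funext n; field_simp
  have hveq : L ^ 2 * (L⁻¹ * N) = L * N := by field_simp
  rw [heq, hveq] at hval3
  exact hval3

lemma plancherel_compact (T : ℝ) (hT : 0 < T) (w : ℝ → ℂ)
    (hwm : StronglyMeasurable w) (hw2 : MemLp w 2 (volume : Measure ℝ))
    (hwi : Integrable w) (hsupp : ∀ t, t ∉ Set.Icc (-T) T → w t = 0) :
    ∫⁻ z : ℝ, ENNReal.ofReal (‖𝓕 w z‖ ^ 2) =
      ENNReal.ofReal (∫ t : ℝ, ‖w t‖ ^ 2) := by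
  set N : ℝ := ∫ t : ℝ, ‖w t‖ ^ 2 with hNdef
  have hN0 : 0 ≤ N := integral_nonneg fun t => by positivity
  set δ : ℝ := (2 * T)⁻¹ with hδdef
  have hδ : 0 < δ := by positivity
  have hcont : Continuous (𝓕 w) := by
    apply VectorFourier.fourierIntegral_continuous Real.continuous_fourierChar _ hwi
    exact continuous_inner
  have hφm : Measurable fun z : ℝ => ENNReal.ofReal (‖𝓕 w z‖ ^ 2) :=
    ENNReal.measurable_ofReal.comp ((hcont.norm.pow 2).measurable)
  have hfund := isAddFundamentalDomain_Ioc hδ 0 (volume : Measure ℝ)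
  have hdecomp := hfund.lintegral_eq_tsum''
    (fun z : ℝ => ENNReal.ofReal (‖𝓕 w z‖ ^ 2))
  have hbij : Function.Bijective (Set.codRestrict (fun n : ℤ => n • δ)
      (AddSubgroup.zmultiples δ) fun n => AddSubgroup.zsmul_mem_zmultiples δ n) :=
    (Equiv.ofInjective (fun n : ℤ => n • δ) (zsmul_left_strictMono hδ).injective).bijective
  set e : ℤ ≃ AddSubgroup.zmultiples δ := Equiv.ofBijective _ hbij with hedef
  have hkey : ∀ z : ℝ, (∑' n : ℤ, ENNReal.ofReal (‖𝓕 w ((n : ℤ) • δ + z)‖ ^ 2))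
      = ENNReal.ofReal ((2 * T) * N) := by
    intro z
    have hgs := grid_parseval T hT w hwm hw2 hwi hsupp (2 * T * z)
    have hfe : (fun n : ℤ => ‖𝓕 w (((n : ℝ) + 2 * T * z) / (2 * T))‖ ^ 2) =
        fun n : ℤ => ‖𝓕 w ((n : ℤ) • δ + z)‖ ^ 2 := by
      funext n
      congr 2
      rw [zsmul_eq_mul, hδdef]
      field_simp
    rw [hfe] at hgs
    rw [← hgs.tsum_eq, ENNReal.ofReal_tsum_of_nonneg (fun n => by positivity) hgs.summable]
  calc ∫⁻ z : ℝ, ENNReal.ofReal (‖𝓕 w z‖ ^ 2)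
      = ∑' g : AddSubgroup.zmultiples δ, ∫⁻ z in Set.Ioc 0 (0 + δ),
          ENNReal.ofReal (‖𝓕 w (↑g + z)‖ ^ 2) := hdecomp
    _ = ∑' n : ℤ, ∫⁻ z in Set.Ioc 0 (0 + δ),
          ENNReal.ofReal (‖𝓕 w ((n : ℤ) • δ + z)‖ ^ 2) := (e.tsum_eq _).symm
    _ = ∫⁻ z in Set.Ioc 0 (0 + δ),
          ∑' n : ℤ, ENNReal.ofReal (‖𝓕 w ((n : ℤ) • δ + z)‖ ^ 2) :=
        (lintegral_tsum fun n => (hφm.comp (measurable_id.const_add _)).aemeasurable).symm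
    _ = ∫⁻ _ in Set.Ioc 0 (0 + δ), ENNReal.ofReal ((2 * T) * N) := by
        apply lintegral_congr fun z => ?_
        exact hkey z
    _ = ENNReal.ofReal ((2 * T) * N) * ENNReal.ofReal δ := by
        rw [setLIntegral_const, Real.volume_Ioc]
        norm_num
    _ = ENNReal.ofReal ((2 * T) * N * δ) := (ENNReal.ofReal_mul (by positivity)).symm
    _ = ENNReal.ofReal N := by
        congr 1
        rw [hδdef]
        field_simp

lemma core_est (α : ℝ) (hα : 0 < α) (hα1 : α < 1) (T : ℝ) (hT : 0 < T) (w : ℝ → ℂ)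
    (hwm : StronglyMeasurable w) (hw2 : MemLp w 2 (volume : Measure ℝ))
    (hwi : Integrable w) (hsupp : ∀ t, t ∉ Set.Icc (-T) T → w t = 0) :
    ∫ z : ℝ, ‖𝓕 w z‖^2 / (1 + |z|)^α ≤
      (4 / (1 - α) + 1) * T^α * ∫ t : ℝ, ‖w t‖^2 := by
  have h1α : (0:ℝ) < 1 - α := by linarith
  set N : ℝ := ∫ t : ℝ, ‖w t‖^2 with hNdef
  have hN0 : 0 ≤ N := integral_nonneg fun t => by positivity
  set m : ℝ := T⁻¹ with hmdef
  have hm : 0 < m := by positivity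
  haveI : IsFiniteMeasure (volume.restrict (Set.Icc (-T) T)) :=
    ⟨by rw [Measure.restrict_apply_univ]; exact measure_Icc_lt_top⟩
  -- restricted integral of ‖w‖² equals N
  have hsubN : (Function.support fun t : ℝ => ‖w t‖^2) ⊆ Set.Icc (-T) T := by
    intro t ht
    by_contra hmem
    exact ht (by simp [hsupp t hmem])
  have hNres : ∫ t in Set.Icc (-T) T, ‖w t‖^2 = N := by
    rw [hNdef, ← integral_indicator measurableSet_Icc, Set.indicator_eq_self.2 hsubN]
  -- Cauchy-Schwarz: L¹ norm bound
  have hw2r : MemLp (fun t => ‖w t‖) (ENNReal.ofReal 2) (volume.restrict (Set.Icc (-T) T)) := by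
    have : ENNReal.ofReal (2:ℝ) = 2 := by norm_num
    rw [this]
    exact (hw2.restrict _).norm
  have hone : MemLp (fun _ : ℝ => (1:ℝ)) (ENNReal.ofReal 2) (volume.restrict (Set.Icc (-T) T)) :=
    memLp_const 1
  have hHolder := integral_mul_le_Lp_mul_Lq_of_nonneg (Real.HolderConjugate.two_two :
      Real.HolderConjugate 2 2) (ae_of_all _ fun t => norm_nonneg (w t))
      (ae_of_all _ fun _ => zero_le_one) hw2r hone
  -- simplify Hölder
  have hA : ∫ t : ℝ, ‖w t‖ ≤ N ^ (2:ℝ)⁻¹ * (2*T) ^ (2:ℝ)⁻¹ := by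
    have hsub1 : (Function.support fun t : ℝ => ‖w t‖) ⊆ Set.Icc (-T) T := by
      intro t ht
      by_contra hmem
      exact ht (by simp [hsupp t hmem])
    have e1 : ∫ t : ℝ, ‖w t‖ = ∫ t in Set.Icc (-T) T, ‖w t‖ * 1 := by
      simp only [mul_one]
      rw [← integral_indicator measurableSet_Icc, Set.indicator_eq_self.2 hsub1]
    have e2 : ∫ t in Set.Icc (-T) T, ‖w t‖ ^ (2:ℝ) = N := by
      rw [← hNres]
      apply integral_congr_ae
      filter_upwards with t
      rw [← Real.rpow_natCast ‖w t‖ 2]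
      norm_num
    have e3 : ∫ t in Set.Icc (-T) T, (1:ℝ) ^ (2:ℝ) = 2*T := by
      simp only [Real.one_rpow]
      rw [setIntegral_const, smul_eq_mul, mul_one, Real.volume_real_Icc_of_le (by linarith)]
      ring
    rw [e1]
    calc ∫ t in Set.Icc (-T) T, ‖w t‖ * 1 ≤
        (∫ t in Set.Icc (-T) T, ‖w t‖ ^ (2:ℝ)) ^ (1/(2:ℝ)) *
        (∫ t in Set.Icc (-T) T, (1:ℝ) ^ (2:ℝ)) ^ (1/(2:ℝ)) := hHolder
      _ = N ^ (2:ℝ)⁻¹ * (2*T) ^ (2:ℝ)⁻¹ := by rw [e2, e3, one_div]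
  -- pointwise bound
  have hpt : ∀ z : ℝ, ‖𝓕 w z‖^2 ≤ 2*T*N := by
    intro z
    have h1 : ‖𝓕 w z‖ ≤ ∫ t : ℝ, ‖w t‖ :=
      VectorFourier.norm_fourierIntegral_le_integral_norm 𝐞 volume (innerₗ ℝ) w z
    have h2 : ‖𝓕 w z‖ ≤ N ^ (2:ℝ)⁻¹ * (2*T) ^ (2:ℝ)⁻¹ := h1.trans hA
    have h3 := pow_le_pow_left₀ (norm_nonneg _) h2 2
    calc ‖𝓕 w z‖^2 ≤ (N ^ (2:ℝ)⁻¹ * (2*T) ^ (2:ℝ)⁻¹)^2 := h3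
      _ = 2*T*N := by
        rw [mul_pow, ← Real.rpow_natCast (N ^ (2:ℝ)⁻¹) 2, ← Real.rpow_natCast ((2*T) ^ (2:ℝ)⁻¹) 2,
          ← Real.rpow_mul hN0, ← Real.rpow_mul (by linarith : (0:ℝ) ≤ 2*T)]
        norm_num
        ring
  -- continuity
  have hcont : Continuous (𝓕 w) := by
    apply VectorFourier.fourierIntegral_continuous Real.continuous_fourierChar _ hwi
    exact continuous_inner
  have hdenc : Continuous fun z : ℝ => (1 + |z|) ^ (-α) := by
    apply (continuous_const.add _root_.continuous_abs).rpow_const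
    intro z
    left
    exact (by positivity : (0:ℝ) < 1 + |z|).ne'
  have hGcont : Continuous fun z : ℝ => ‖𝓕 w z‖^2 / (1+|z|)^α := by
    apply (hcont.norm.pow 2).div
    · apply (continuous_const.add _root_.continuous_abs).rpow_const
      intro z; left; exact (by positivity : (0:ℝ) < 1 + |z|).ne'
    · intro z
      positivity
  have hGeq : ∀ z : ℝ, ‖𝓕 w z‖^2 / (1+|z|)^α =
      ‖𝓕 w z‖^2 * (1+|z|)^(-α) := by
    intro z
    rw [Real.rpow_neg (by positivity), div_eq_mul_inv]
  rw [integral_eq_lintegral_of_nonneg_ae (ae_of_all _ fun z => by positivity)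
    hGcont.aestronglyMeasurable]
  apply ENNReal.toReal_le_of_le_ofReal (by positivity)
  rw [← lintegral_add_compl (fun z : ℝ => ENNReal.ofReal (‖𝓕 w z‖^2 / (1+|z|)^α))
    (measurableSet_Icc : MeasurableSet (Set.Icc (-m) m))]
  -- low frequencies
  have hlowfun : IntegrableOn (fun z : ℝ => 2*T*N * (1+|z|)^(-α)) (Set.Icc (-m) m) :=
    (continuous_const.mul hdenc).integrableOn_Icc
  have hlow : ∫⁻ z in Set.Icc (-m) m, ENNReal.ofReal (‖𝓕 w z‖^2 / (1+|z|)^α) ≤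
      ENNReal.ofReal (4/(1-α) * T^α * N) := by
    have step1 : ∫⁻ z in Set.Icc (-m) m,
        ENNReal.ofReal (‖𝓕 w z‖^2 / (1+|z|)^α) ≤
        ∫⁻ z in Set.Icc (-m) m, ENNReal.ofReal (2*T*N * (1+|z|)^(-α)) := by
      apply lintegral_mono
      intro z
      apply ENNReal.ofReal_le_ofReal
      rw [hGeq z]
      apply mul_le_mul_of_nonneg_right (hpt z) (Real.rpow_nonneg (by positivity) _)
    have step2 : ∫⁻ z in Set.Icc (-m) m, ENNReal.ofReal (2*T*N * (1+|z|)^(-α)) =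
        ENNReal.ofReal (∫ z in Set.Icc (-m) m, 2*T*N * (1+|z|)^(-α)) := by
      rw [← ofReal_integral_eq_lintegral_ofReal hlowfun
        (ae_of_all _ fun z => by positivity)]
    have hJ : ∫ z in Set.Icc (-m) m, 2*T*N * (1+|z|)^(-α) =
        2*T*N * ∫ z in Set.Icc (-m) m, (1+|z|)^(-α) := integral_const_mul _ _
    -- compute the J integral
    have hJ1 : ∫ z in Set.Icc (-m) m, (1+|z|)^(-α) =
        2 * (((1+m)^(1-α) - 1)/(1-α)) := by
      rw [integral_Icc_eq_integral_Ioc,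
        ← intervalIntegral.integral_of_le (by linarith : -m ≤ m)]
      have hi1 : IntervalIntegrable (fun z : ℝ => (1+|z|)^(-α)) volume (-m) 0 :=
        hdenc.intervalIntegrable _ _
      have hi2 : IntervalIntegrable (fun z : ℝ => (1+|z|)^(-α)) volume 0 m :=
        hdenc.intervalIntegrable _ _
      rw [← intervalIntegral.integral_add_adjacent_intervals hi1 hi2]
      have hbase : ∫ x in (0:ℝ)..m, (1+x)^(-α) = ((1+m)^(1-α) - 1)/(1-α) := by
        have := intervalIntegral.integral_comp_add_left (a := (0:ℝ)) (b := m)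
          (fun u : ℝ => u^(-α)) 1
        rw [this, add_zero]
        rw [integral_rpow (Or.inl (by linarith : (-1:ℝ) < -α))]
        rw [Real.one_rpow]
        ring_nf
      have hright : ∫ x in (0:ℝ)..m, (1+|x|)^(-α) = ((1+m)^(1-α) - 1)/(1-α) := by
        rw [← hbase]
        apply intervalIntegral.integral_congr
        intro x hx
        rw [Set.uIcc_of_le (by linarith : (0:ℝ) ≤ m)] at hx
        dsimp only
        rw [_root_.abs_of_nonneg hx.1]
      have hleft : ∫ x in (-m)..(0:ℝ), (1+|x|)^(-α) = ((1+m)^(1-α) - 1)/(1-α) := by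
        have e1 : ∫ x in (-m)..(0:ℝ), (1+|x|)^(-α) = ∫ x in (-m)..(0:ℝ), (1+(-x))^(-α) := by
          apply intervalIntegral.integral_congr
          intro x hx
          rw [Set.uIcc_of_le (by linarith : -m ≤ (0:ℝ))] at hx
          dsimp only
          rw [_root_.abs_of_nonpos hx.2]
        rw [e1]
        have e2 := intervalIntegral.integral_comp_neg (a := -m) (b := (0:ℝ))
          (fun u : ℝ => (1+u)^(-α))
        rw [e2, neg_zero, neg_neg, hbase]
      rw [hright, hleft]
      ring
    -- the arithmetic bound
    have harith : 2*T*N * (2 * (((1+m)^(1-α) - 1)/(1-α))) ≤ 4/(1-α) * T^α * N := by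
      have hb : (1+m)^(1-α) - 1 ≤ m^(1-α) := by
        have := my_bern hm.le (by linarith : (0:ℝ) ≤ 1-α) (by linarith : 1-α ≤ 1)
        linarith
      have hmT : m^(1-α) = T^(α-1) := by
        rw [hmdef, ← Real.rpow_neg_one T, ← Real.rpow_mul hT.le]
        congr 1
        ring
      have hTT : T * T^(α-1) = T^α := by
        nth_rewrite 1 [← Real.rpow_one T]
        rw [← Real.rpow_add hT]
        congr 1
        ring
      calc 2*T*N * (2 * (((1+m)^(1-α) - 1)/(1-α)))
          ≤ 2*T*N * (2 * (m^(1-α)/(1-α))) := by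
            gcongr
          _ = 4/(1-α) * T^α * N := by
            rw [hmT, ← hTT]
            field_simp
            ring
    calc ∫⁻ z in Set.Icc (-m) m, ENNReal.ofReal (‖𝓕 w z‖^2 / (1+|z|)^α)
        ≤ ∫⁻ z in Set.Icc (-m) m, ENNReal.ofReal (2*T*N * (1+|z|)^(-α)) := step1
      _ = ENNReal.ofReal (∫ z in Set.Icc (-m) m, 2*T*N * (1+|z|)^(-α)) := step2
      _ ≤ ENNReal.ofReal (4/(1-α) * T^α * N) := by
          apply ENNReal.ofReal_le_ofReal
          rw [hJ, hJ1]
          exact harith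
  have hφm : Measurable fun z : ℝ => ENNReal.ofReal (‖𝓕 w z‖ ^ 2) :=
    ENNReal.measurable_ofReal.comp ((hcont.norm.pow 2).measurable)
  have hhigh : ∫⁻ z in (Set.Icc (-m) m)ᶜ,
      ENNReal.ofReal (‖𝓕 w z‖^2 / (1+|z|)^α) ≤
      ENNReal.ofReal (T^α * N) := by
    have hplan := plancherel_compact T hT w hwm hw2 hwi hsupp
    calc ∫⁻ z in (Set.Icc (-m) m)ᶜ, ENNReal.ofReal (‖𝓕 w z‖^2 / (1+|z|)^α)
        ≤ ∫⁻ z in (Set.Icc (-m) m)ᶜ,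
            ENNReal.ofReal ((1+m)^(-α)) * ENNReal.ofReal (‖𝓕 w z‖^2) := by
          apply setLIntegral_mono (measurable_const.mul hφm)
          intro z hz
          have hmz : m ≤ |z| := by
            by_contra hlt
            push_neg at hlt
            exact hz (abs_le.mp hlt.le)
          simp only [Pi.mul_apply]
          rw [← ENNReal.ofReal_mul (by positivity)]
          apply ENNReal.ofReal_le_ofReal
          rw [hGeq z, mul_comm ((1+m)^(-α)) _]
          apply mul_le_mul_of_nonneg_left _ (by positivity)
          exact Real.rpow_le_rpow_of_nonpos (by positivity) (by linarith) (by linarith)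
      _ = ENNReal.ofReal ((1+m)^(-α)) *
            ∫⁻ z in (Set.Icc (-m) m)ᶜ, ENNReal.ofReal (‖𝓕 w z‖^2) :=
          lintegral_const_mul _ hφm
      _ ≤ ENNReal.ofReal ((1+m)^(-α)) *
            ∫⁻ z : ℝ, ENNReal.ofReal (‖𝓕 w z‖^2) :=
          mul_le_mul_right (lintegral_mono' Measure.restrict_le_self le_rfl) _
      _ = ENNReal.ofReal ((1+m)^(-α)) * ENNReal.ofReal N := by rw [hplan]
      _ = ENNReal.ofReal ((1+m)^(-α) * N) := (ENNReal.ofReal_mul (by positivity)).symm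
      _ ≤ ENNReal.ofReal (T^α * N) := by
          apply ENNReal.ofReal_le_ofReal
          apply mul_le_mul_of_nonneg_right _ hN0
          have h1 : (1+m)^(-α) ≤ m^(-α) :=
            Real.rpow_le_rpow_of_nonpos hm (by linarith) (by linarith)
          have h2 : m^(-α) = T^α := by
            rw [hmdef, ← Real.rpow_neg_one T, ← Real.rpow_mul hT.le]
            congr 1; ring
          linarith
  have hfinal : 4/(1-α)*T^α*N + T^α*N = (4/(1-α)+1) * T^α * N := by ring
  calc (∫⁻ z in Set.Icc (-m) m, ENNReal.ofReal (‖𝓕 w z‖^2 / (1+|z|)^α)) +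
        ∫⁻ z in (Set.Icc (-m) m)ᶜ, ENNReal.ofReal (‖𝓕 w z‖^2 / (1+|z|)^α)
      ≤ ENNReal.ofReal (4/(1-α)*T^α*N) + ENNReal.ofReal (T^α*N) := add_le_add hlow hhigh
    _ = ENNReal.ofReal ((4/(1-α)+1) * T^α * N) := by
        rw [← ENNReal.ofReal_add (by positivity) (by positivity), hfinal]

theorem stmt_14 (α : ℝ) (hα : 0 < α) (hα1 : α < 1) :
    ∃ C > 0, ∀ (T : ℝ), 0 < T → ∀ (w : ℝ → ℂ),
      MeasureTheory.MemLp w 2 (volume : Measure ℝ) →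
      Function.support w ⊆ Set.Icc (-T) T →
      ∫ z : ℝ, ‖𝓕 w z‖^2 / (1 + |z|)^α ≤
        C * T^α * ∫ t : ℝ, ‖w t‖^2 := by
  have h1α : (0:ℝ) < 1 - α := by linarith
  refine ⟨4 / (1 - α) + 1, by positivity, fun T hT w hw2 hsupp => ?_⟩
  set w' : ℝ → ℂ := Set.indicator (Set.Icc (-T) T) (hw2.1.mk w) with hw'def
  have hae : w =ᵐ[volume] w' := by
    have h1 : w = Set.indicator (Set.Icc (-T) T) w := (Set.indicator_eq_self.2 hsupp).symm
    nth_rewrite 1 [h1]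
    filter_upwards [hw2.1.ae_eq_mk] with t ht
    simp only [hw'def, Set.indicator]
    split <;> simp [ht]
  have hw'm : StronglyMeasurable w' := hw2.1.stronglyMeasurable_mk.indicator measurableSet_Icc
  have hw'2 : MemLp w' 2 (volume : Measure ℝ) := hw2.ae_eq hae
  have hsupp' : ∀ t, t ∉ Set.Icc (-T) T → w' t = 0 := by
    intro t ht; simp [hw'def, Set.indicator_of_notMem ht]
  have hw'i : Integrable w' := by
    rw [hw'def, integrable_indicator_iff measurableSet_Icc]
    have hmem : MemLp (hw2.1.mk w) 2 (volume.restrict (Set.Icc (-T) T)) :=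
      (hw2.ae_eq hw2.1.ae_eq_mk).restrict _
    haveI : IsFiniteMeasure (volume.restrict (Set.Icc (-T) T)) :=
      ⟨by rw [Measure.restrict_apply_univ]; exact measure_Icc_lt_top⟩
    exact hmem.integrable (by norm_num)
  have hF : ∀ z, 𝓕 w z = 𝓕 w' z := by
    intro z
    rw [Real.fourier_real_eq, Real.fourier_real_eq]
    exact integral_congr_ae (by filter_upwards [hae] with t ht; rw [ht])
  have hI : ∫ t : ℝ, ‖w t‖^2 = ∫ t : ℝ, ‖w' t‖^2 :=
    integral_congr_ae (by filter_upwards [hae] with t ht; rw [ht])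
  calc ∫ z : ℝ, ‖𝓕 w z‖^2 / (1 + |z|)^α
      = ∫ z : ℝ, ‖𝓕 w' z‖^2 / (1 + |z|)^α := by simp_rw [hF]
    _ ≤ (4 / (1 - α) + 1) * T^α * ∫ t : ℝ, ‖w' t‖^2 :=
        core_est α hα hα1 T hT w' hw'm hw'2 hw'i hsupp'
    _ = (4 / (1 - α) + 1) * T^α * ∫ t : ℝ, ‖w t‖^2 := by rw [hI]
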